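/- Let f : ℝ^{n×p} → ℝ be differentiable with ∇f L-Lipschitz continuous (with respect to the Frobenius norm) for some L ≥ 0, and let η > L. If Z, Y, X' ∈ O^{n,p}_+ satisfy f̄_Z(Y) ≤ f̄_Z(Z) and f̄_Y(X') ≤ f̄_Y(Y), then f(Z) − f(X') ≥ ((η − L)/2)·(‖Y − Z‖_F² + ‖X' − Y‖_F²). -/

import Mathlib

open Matrix

attribute [local instance] Matrix.frobeniusNormedAddCommGroup Matrix.frobeniusNormedSpace

/-- Frobenius norm of a real matrix. -/
noncomputable def fnorm {n p : ℕ} (A : Matrix (Fin n) (Fin p) ℝ) : ℝ :=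
  Real.sqrt (∑ i, ∑ j, (A i j) ^ 2)

/-- Frobenius inner product of real matrices. -/
noncomputable def finner {n p : ℕ} (A B : Matrix (Fin n) (Fin p) ℝ) : ℝ :=
  ∑ i, ∑ j, A i j * B i j

/-- `g` is the (Euclidean) gradient of the differentiable function `f`. -/
def IsGradient {n p : ℕ} (f : Matrix (Fin n) (Fin p) ℝ → ℝ)
    (g : Matrix (Fin n) (Fin p) ℝ → Matrix (Fin n) (Fin p) ℝ) : Prop :=
  Differentiable ℝ f ∧ ∀ Z H, fderiv ℝ f Z H = finner (g Z) H

/-- The proximal linearization `f̄_Z(X) = f(Z) + ⟨∇f(Z), X − Z⟩ + (η/2)‖X − Z‖_F²`. -/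
noncomputable def fbar {n p : ℕ} (f : Matrix (Fin n) (Fin p) ℝ → ℝ)
    (g : Matrix (Fin n) (Fin p) ℝ → Matrix (Fin n) (Fin p) ℝ)
    (η : ℝ) (Z X : Matrix (Fin n) (Fin p) ℝ) : ℝ :=
  f Z + finner (g Z) (X - Z) + η / 2 * fnorm (X - Z) ^ 2


lemma fnorm_nonneg {n p : ℕ} (A : Matrix (Fin n) (Fin p) ℝ) : 0 ≤ fnorm A :=
  Real.sqrt_nonneg _

lemma fnorm_smul {n p : ℕ} (t : ℝ) (A : Matrix (Fin n) (Fin p) ℝ) :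
    fnorm (t • A) = |t| * fnorm A := by
  unfold fnorm
  rw [← Real.sqrt_sq_eq_abs, ← Real.sqrt_mul (sq_nonneg t)]
  congr 1
  rw [Finset.mul_sum]
  refine Finset.sum_congr rfl fun i _ => ?_
  rw [Finset.mul_sum]
  refine Finset.sum_congr rfl fun j _ => ?_
  simp [Matrix.smul_apply, mul_pow]

lemma finner_sub_left {n p : ℕ} (A B C : Matrix (Fin n) (Fin p) ℝ) :
    finner (A - B) C = finner A C - finner B C := by
  unfold finner
  rw [← Finset.sum_sub_distrib]
  refine Finset.sum_congr rfl fun i _ => ?_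
  rw [← Finset.sum_sub_distrib]
  refine Finset.sum_congr rfl fun j _ => ?_
  simp [Matrix.sub_apply, sub_mul]

lemma finner_cs {n p : ℕ} (A B : Matrix (Fin n) (Fin p) ℝ) :
    finner A B ≤ fnorm A * fnorm B := by
  unfold finner fnorm
  have := Real.sum_mul_le_sqrt_mul_sqrt (Finset.univ : Finset (Fin n × Fin p))
    (fun q => A q.1 q.2) (fun q => B q.1 q.2)
  simpa [Fintype.sum_prod_type] using this

/-- Descent lemma: if `∇f` is `L`-Lipschitz then
`f(B) ≤ f(A) + ⟨∇f(A), B − A⟩ + (L/2)‖B − A‖²`. -/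
lemma descent {n p : ℕ} (f : Matrix (Fin n) (Fin p) ℝ → ℝ)
    (g : Matrix (Fin n) (Fin p) ℝ → Matrix (Fin n) (Fin p) ℝ)
    (L : ℝ) (hgrad : IsGradient f g)
    (hLip : ∀ A B : Matrix (Fin n) (Fin p) ℝ, fnorm (g A - g B) ≤ L * fnorm (A - B))
    (A B : Matrix (Fin n) (Fin p) ℝ) :
    f B ≤ f A + finner (g A) (B - A) + L / 2 * fnorm (B - A) ^ 2 := by
  set V := B - A with hV
  set φ : ℝ → ℝ := fun t =>
    f (A + t • V) - t * finner (g A) V - L * t ^ 2 / 2 * fnorm V ^ 2 with hφ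
  have hderiv : ∀ t : ℝ, HasDerivAt φ
      (finner (g (A + t • V)) V - finner (g A) V - L * t * fnorm V ^ 2) t := by
    intro t
    have h1 : HasDerivAt (fun t : ℝ => A + t • V) V t := by
      have := ((hasDerivAt_id t).smul_const V).const_add A; simp only [id_eq, one_smul] at this; exact this
    have h2 : HasDerivAt (fun t : ℝ => f (A + t • V))
        (fderiv ℝ f (A + t • V) V) t :=
      (hgrad.1 (A + t • V)).hasFDerivAt.comp_hasDerivAt t h1
    rw [hgrad.2] at h2
    have h3 : HasDerivAt (fun t : ℝ => t * finner (g A) V) (finner (g A) V) t := by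
      simpa using (hasDerivAt_id t).mul_const (finner (g A) V)
    have h4 : HasDerivAt (fun t : ℝ => L * t ^ 2 / 2 * fnorm V ^ 2)
        (L * t * fnorm V ^ 2) t := by
      have : HasDerivAt (fun t : ℝ => t ^ 2) (2 * t) t := by
        simpa using hasDerivAt_pow 2 t
      have := ((this.const_mul L).div_const 2).mul_const (fnorm V ^ 2)
      exact this.congr_deriv (by ring)
    exact (h2.sub h3).sub h4
  have hanti : AntitoneOn φ (Set.Icc 0 1) := by
    apply antitoneOn_of_deriv_nonpos (convex_Icc 0 1)
    · exact fun t _ => ((hderiv t).differentiableAt.continuousAt).continuousWithinAt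
    · exact fun t _ => ((hderiv t).differentiableAt).differentiableWithinAt
    · intro t ht
      rw [interior_Icc] at ht
      rw [(hderiv t).deriv]
      have hcs : finner (g (A + t • V)) V - finner (g A) V ≤ L * t * fnorm V ^ 2 := by
        rw [← finner_sub_left]
        calc finner (g (A + t • V) - g A) V
            ≤ fnorm (g (A + t • V) - g A) * fnorm V := finner_cs _ _
          _ ≤ L * fnorm (A + t • V - A) * fnorm V := by
              apply mul_le_mul_of_nonneg_right (hLip _ _) (fnorm_nonneg _)
          _ = L * t * fnorm V ^ 2 := by
              have : A + t • V - A = t • V := by abel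
              rw [this, fnorm_smul, abs_of_nonneg (le_of_lt ht.1)]
              ring
      linarith
  have key := hanti (Set.mem_Icc.mpr ⟨le_refl 0, zero_le_one⟩)
      (Set.mem_Icc.mpr ⟨zero_le_one, le_refl 1⟩) zero_le_one
  simp only [hφ] at key
  norm_num at key
  have hAB : A + V = B := by rw [hV]; abel
  rw [hAB] at key
  linarith

lemma finner_zero_right {n p : ℕ} (A : Matrix (Fin n) (Fin p) ℝ) :
    finner A 0 = 0 := by unfold finner; simp

lemma fnorm_zero {n p : ℕ} : fnorm (0 : Matrix (Fin n) (Fin p) ℝ) = 0 := by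
  unfold fnorm; simp

/-- Lemma `le:des-f`, one step: if `∇f` is `L`-Lipschitz, `η > L`,
and `Z, Y, X' ∈ O^{n,p}_+` satisfy `f̄_Z(Y) ≤ f̄_Z(Z)` and `f̄_Y(X') ≤ f̄_Y(Y)`,
then `f(Z) − f(X') ≥ ((η − L)/2)(‖Y − Z‖_F² + ‖X' − Y‖_F²)`. -/
theorem two_step_sufficient_decrease
    {n p : ℕ} (f : Matrix (Fin n) (Fin p) ℝ → ℝ)
    (g : Matrix (Fin n) (Fin p) ℝ → Matrix (Fin n) (Fin p) ℝ)
    (L η : ℝ) (hL : 0 ≤ L) (hη : L < η)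
    (hgrad : IsGradient f g)
    (hLip : ∀ A B : Matrix (Fin n) (Fin p) ℝ, fnorm (g A - g B) ≤ L * fnorm (A - B))
    (Z Y X' : Matrix (Fin n) (Fin p) ℝ)
    (hZ : Zᵀ * Z = 1 ∧ ∀ i j, 0 ≤ Z i j)
    (hY : Yᵀ * Y = 1 ∧ ∀ i j, 0 ≤ Y i j)
    (hX' : X'ᵀ * X' = 1 ∧ ∀ i j, 0 ≤ X' i j)
    (hdec1 : fbar f g η Z Y ≤ fbar f g η Z Z)
    (hdec2 : fbar f g η Y X' ≤ fbar f g η Y Y) :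
    (η - L) / 2 * (fnorm (Y - Z) ^ 2 + fnorm (X' - Y) ^ 2) ≤ f Z - f X' := by
  unfold fbar at hdec1 hdec2
  simp only [sub_self, finner_zero_right, fnorm_zero] at hdec1 hdec2
  have d1 := descent f g L hgrad hLip Z Y
  have d2 := descent f g L hgrad hLip Y X'
  nlinarith [fnorm_nonneg (Y - Z), fnorm_nonneg (X' - Y), sq_nonneg (fnorm (Y - Z)),
    sq_nonneg (fnorm (X' - Y))]
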